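/- Let $f : \mathbb{R}^n \to \mathbb{R}$ be continuously differentiable with $L_g$-Lipschitz gradient. Let $\hat{x} \in \mathbb{R}^n$, $\hat{\theta} \in [0,1)$, and let $\hat{g} \in \mathbb{R}^n$ satisfy $\|\nabla f(\hat{x}) - \hat{g}\|_2 \leq \hat{\theta}\|\hat{g}\|_2$. If $0 < \alpha \leq \frac{(1-\hat{\theta})^2}{L_g(1+\hat{\theta})}$, then $f(\hat{x} - \alpha \hat{g}) \leq f(\hat{x}) - \frac{\alpha}{2(1+\hat{\theta})}\|\nabla f(\hat{x})\|_2^2$. -/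

import Mathlib

open InnerProductSpace in
theorem descent_lemma {n : ℕ} (f : EuclideanSpace ℝ (Fin n) → ℝ)
    (Lg : ℝ) (hLg : 0 < Lg) (hf : ContDiff ℝ 1 f)
    (hlip : ∀ x y, ‖gradient f x - gradient f y‖ ≤ Lg * ‖x - y‖)
    (x v : EuclideanSpace ℝ (Fin n)) :
    f (x + v) ≤ f x + ⟪gradient f x, v⟫_ℝ + Lg / 2 * ‖v‖ ^ 2 := by
  have hdiff : Differentiable ℝ f := hf.differentiable one_ne_zero
  set h : ℝ → ℝ := fun t => f (x + t • v) - t * ⟪gradient f x, v⟫_ℝ - Lg * t ^ 2 / 2 * ‖v‖ ^ 2 with hh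
  have hderiv : ∀ t : ℝ, HasDerivAt h
      (⟪gradient f (x + t • v), v⟫_ℝ - ⟪gradient f x, v⟫_ℝ - Lg * t * ‖v‖ ^ 2) t := by
    intro t
    have h1 : HasDerivAt (fun t : ℝ => x + t • v) v t := by
      simpa using ((hasDerivAt_id t).smul_const v).const_add x
    have h2 : HasFDerivAt f (toDual ℝ _ (gradient f (x + t • v))) (x + t • v) :=
      (hdiff _).hasGradientAt.hasFDerivAt
    have h3 : HasDerivAt (fun t : ℝ => f (x + t • v)) ⟪gradient f (x + t • v), v⟫_ℝ t := by
      have := h2.comp_hasDerivAt t h1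
      rw [InnerProductSpace.toDual_apply_apply] at this
      exact this
    have h4 : HasDerivAt (fun t : ℝ => t * ⟪gradient f x, v⟫_ℝ) ⟪gradient f x, v⟫_ℝ t := by
      simpa using (hasDerivAt_id t).mul_const _
    have h5 : HasDerivAt (fun t : ℝ => Lg * t ^ 2 / 2 * ‖v‖ ^ 2) (Lg * t * ‖v‖ ^ 2) t := by
      have := (((hasDerivAt_pow 2 t).const_mul Lg).div_const 2).mul_const (‖v‖ ^ 2)
      refine this.congr_deriv ?_
      ring
    exact (h3.sub h4).sub h5
  have hanti : AntitoneOn h (Set.Icc (0:ℝ) 1) := by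
    apply antitoneOn_of_deriv_nonpos (convex_Icc 0 1)
    · exact fun t _ => (hderiv t).differentiableAt.continuousAt.continuousWithinAt
    · exact fun t _ => (hderiv t).differentiableAt.differentiableWithinAt
    · intro t ht
      rw [interior_Icc] at ht
      rw [(hderiv t).deriv]
      have hb : ⟪gradient f (x + t • v) - gradient f x, v⟫_ℝ ≤ Lg * t * ‖v‖ ^ 2 := by
        calc ⟪gradient f (x + t • v) - gradient f x, v⟫_ℝ
            ≤ ‖gradient f (x + t • v) - gradient f x‖ * ‖v‖ := real_inner_le_norm _ _
          _ ≤ (Lg * ‖(x + t • v) - x‖) * ‖v‖ := by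
              gcongr; exact hlip _ _
          _ = Lg * (|t| * ‖v‖) * ‖v‖ := by
              rw [add_sub_cancel_left, norm_smul]; norm_num
          _ ≤ Lg * t * ‖v‖ ^ 2 := by
              rw [abs_of_pos ht.1]; ring_nf; rfl
      rw [inner_sub_left] at hb
      linarith
  have := hanti (Set.mem_Icc.2 ⟨le_rfl, zero_le_one⟩) (Set.mem_Icc.2 ⟨zero_le_one, le_rfl⟩) zero_le_one
  simp only [hh, one_smul, one_pow, one_mul, zero_smul, add_zero, zero_mul, sub_zero,
    mul_zero, zero_pow, zero_div, ne_eq, OfNat.ofNat_ne_zero, not_false_eq_true] at this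
  linarith

theorem inexact_gradient_descent_step {n : ℕ} (f : EuclideanSpace ℝ (Fin n) → ℝ)
    (Lg : ℝ) (hLg : 0 < Lg) (hf : ContDiff ℝ 1 f)
    (hlip : ∀ x y, ‖gradient f x - gradient f y‖ ≤ Lg * ‖x - y‖)
    (xhat ghat : EuclideanSpace ℝ (Fin n)) (θ α : ℝ) (hθ0 : 0 ≤ θ) (hθ1 : θ < 1)
    (hnorm : ‖gradient f xhat - ghat‖ ≤ θ * ‖ghat‖)
    (hα0 : 0 < α) (hα : α ≤ (1 - θ) ^ 2 / (Lg * (1 + θ))) :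
    f (xhat - α • ghat) ≤ f xhat - α / (2 * (1 + θ)) * ‖gradient f xhat‖ ^ 2 := by
  have key := descent_lemma f Lg hLg hf hlip xhat (-(α • ghat))
  rw [← sub_eq_add_neg] at key
  rw [inner_neg_right, real_inner_smul_right, norm_neg, norm_smul] at key
  set G := gradient f xhat with hG
  have hsq : ‖G - ghat‖ ^ 2 ≤ (θ * ‖ghat‖) ^ 2 := by
    apply pow_le_pow_left₀ (norm_nonneg _) hnorm
  rw [norm_sub_sq_real] at hsq
  have hθ1' : (0:ℝ) < 1 + θ := by linarith
  have hα' : Lg * α * (1 + θ) ≤ (1 - θ) ^ 2 := by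
    rw [le_div_iff₀ (by positivity)] at hα
    nlinarith
  have hBnn : (0:ℝ) ≤ ‖ghat‖ := norm_nonneg _
  have hGnn : (0:ℝ) ≤ ‖G‖ := norm_nonneg _
  have habs : ‖(α:ℝ)‖ = α := by rw [Real.norm_eq_abs, abs_of_pos hα0]
  rw [habs, mul_pow] at key
  have h1 : α / (2 * (1 + θ)) * ‖G‖ ^ 2 ≤ α / 2 * ‖G‖ ^ 2 := by
    apply mul_le_mul_of_nonneg_right _ (by positivity)
    apply div_le_div_of_nonneg_left hα0.le (by norm_num) (by linarith)
  have hb : (0:ℝ) ≤ α * ‖ghat‖ ^ 2 := by positivity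
  have h2 : Lg * (α ^ 2 * ‖ghat‖ ^ 2) ≤ (1 - θ ^ 2) * (α * ‖ghat‖ ^ 2) := by
    rw [← mul_le_mul_iff_of_pos_right hθ1']
    nlinarith [mul_le_mul_of_nonneg_right hα' hb,
      mul_nonneg (mul_nonneg (mul_nonneg hθ0 (by linarith : (0:ℝ) ≤ 1 - θ)) hα0.le)
        (sq_nonneg ‖ghat‖)]
  have h3 := mul_le_mul_of_nonneg_left hsq hα0.le
  nlinarith [h1, h2, h3, key]
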